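/- For any partition λ, the following identity of rational functions in q and z holds: ∏_{i=1}^{l(λ)} (1 + q^{λ_i - i + 1/2} z)/(1 + q^{-i + 1/2} z) = ∏_{j=1}^{l(λ^t)} (1 + q^{j - 1/2} z)/(1 + q^{-λ^t_j + j - 1/2} z). -/

import Mathlib

noncomputable abbrev stmt10K := FractionRing (MvPolynomial (Fin 2) ℚ)


/-- `u` plays the role of `q^{1/2}` (so `q^a = u^(2a)`). -/
noncomputable def stmt10u : stmt10K :=
  algebraMap (MvPolynomial (Fin 2) ℚ) stmt10K (MvPolynomial.X 0)

/-- the indeterminate `z`. -/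
noncomputable def stmt10z : stmt10K :=
  algebraMap (MvPolynomial (Fin 2) ℚ) stmt10K (MvPolynomial.X 1)


lemma stmt10_inj : Function.Injective
    (algebraMap (MvPolynomial (Fin 2) ℚ) stmt10K) :=
  IsFractionRing.injective _ _

lemma stmt10u_ne : stmt10u ≠ 0 := by
  intro h
  have : (MvPolynomial.X 0 : MvPolynomial (Fin 2) ℚ) = 0 := by
    apply stmt10_inj; simpa [stmt10u] using h
  exact MvPolynomial.X_ne_zero 0 this

lemma stmt10_ne (n : ℤ) : 1 + stmt10u ^ n * stmt10z ≠ 0 := by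
  set φ := algebraMap (MvPolynomial (Fin 2) ℚ) stmt10K with hφ
  intro h
  rcases le_or_gt 0 n with hn | hn
  · lift n to ℕ using hn
    rw [zpow_natCast] at h
    have : φ (1 + MvPolynomial.X 0 ^ n * MvPolynomial.X 1) = 0 := by
      simpa [stmt10u, stmt10z, map_add, map_mul, map_pow] using h
    have h2 : (1 + MvPolynomial.X 0 ^ n * MvPolynomial.X 1 : MvPolynomial (Fin 2) ℚ) = 0 := by
      apply stmt10_inj; simpa using this
    have := congrArg MvPolynomial.constantCoeff h2
    simp [MvPolynomial.constantCoeff_X] at this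
  · have hm : 0 < -n := by omega
    lift -n to ℕ using hm.le with m hm'
    have hmpos : 0 < m := by omega
    have h3 : stmt10u ^ (m:ℤ) * (1 + stmt10u ^ n * stmt10z) = 0 := by rw [h, mul_zero]
    have h4 : stmt10u ^ (m:ℤ) + stmt10z = 0 := by
      have : stmt10u ^ (m:ℤ) * stmt10u ^ n = 1 := by
        rw [← zpow_add₀ stmt10u_ne]
        norm_num [show (m:ℤ) + n = 0 by omega]
      calc stmt10u ^ (m:ℤ) + stmt10z
          = stmt10u ^ (m:ℤ) * (1 + stmt10u ^ n * stmt10z) := by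
            rw [mul_add, mul_one, ← mul_assoc, this, one_mul]
        _ = 0 := h3
    rw [zpow_natCast] at h4
    have : φ (MvPolynomial.X 0 ^ m + MvPolynomial.X 1) = 0 := by
      simpa [stmt10u, stmt10z, map_add, map_pow] using h4
    have h2 : (MvPolynomial.X 0 ^ m + MvPolynomial.X 1 : MvPolynomial (Fin 2) ℚ) = 0 := by
      apply stmt10_inj; simpa using this
    have := congrArg (MvPolynomial.eval (fun i : Fin 2 => if i = 0 then (0:ℚ) else 1)) h2
    simp [hmpos.ne', zero_pow] at this

lemma aux_down (s : Finset ℕ) (h : ∀ a b : ℕ, a ≤ b → b ∈ s → a ∈ s) :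
    s = Finset.range s.card := by
  have hsub : s ⊆ Finset.range s.card := by
    intro b hb
    rw [Finset.mem_range]
    have : Finset.range (b + 1) ⊆ s := by
      intro a ha
      exact h a b (by simpa [Nat.lt_succ_iff] using ha) hb
    have := Finset.card_le_card this
    simpa using this
  exact Finset.eq_of_subset_of_card_le hsub (by simp)


/-- For any partition `λ` (an antitone `f : ℕ → ℕ` vanishing from index `l` on) with
conjugate `λ^t` (of length `f 0`), as rational functions in `q^{1/2}` and `z`:
`∏_{i=1}^{l(λ)} (1 + q^{λ_i-i+1/2} z)/(1 + q^{-i+1/2} z)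
  = ∏_{j=1}^{l(λ^t)} (1 + q^{j-1/2} z)/(1 + q^{-λ^t_j+j-1/2} z)`. -/
theorem stmt10 (f : ℕ → ℕ) (hf : Antitone f) (l : ℕ) (hl : ∀ i, l ≤ i → f i = 0)
    (g : ℕ → ℕ) (hg : ∀ i, g i = ((Finset.range l).filter (fun j => i + 1 ≤ f j)).card) :
    (∏ i ∈ Finset.range l,
        (1 + stmt10u ^ (2 * (f i : ℤ) - 2 * ((i : ℤ) + 1) + 1) * stmt10z)
          / (1 + stmt10u ^ (-2 * ((i : ℤ) + 1) + 1) * stmt10z))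
      = ∏ j ∈ Finset.range (f 0),
          (1 + stmt10u ^ (2 * ((j : ℤ) + 1) - 1) * stmt10z)
            / (1 + stmt10u ^ (-2 * (g j : ℤ) + 2 * ((j : ℤ) + 1) - 1) * stmt10z) := by
  classical
  set h : ℤ → stmt10K := fun c => 1 + stmt10u ^ (2 * c + 1) * stmt10z with hh
  have hne : ∀ c : ℤ, h c ≠ 0 := fun c => stmt10_ne _
  -- characterization of g
  have gchar : ∀ j i', i' < g j ↔ j + 1 ≤ f i' := by
    intro j i'
    have hdown : ∀ a b : ℕ, a ≤ b →
        b ∈ (Finset.range l).filter (fun x => j + 1 ≤ f x) →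
        a ∈ (Finset.range l).filter (fun x => j + 1 ≤ f x) := by
      intro a b hab hb
      simp only [Finset.mem_filter, Finset.mem_range] at hb ⊢
      exact ⟨lt_of_le_of_lt hab hb.1, le_trans hb.2 (hf hab)⟩
    have heq := aux_down _ hdown
    rw [← hg j] at heq
    constructor
    · intro hlt
      have : i' ∈ Finset.range (g j) := Finset.mem_range.mpr hlt
      rw [← heq] at this
      simpa using (Finset.mem_filter.mp this).2
    · intro hle
      have hil : i' < l := by
        by_contra hc
        push_neg at hc
        rw [hl i' hc] at hle; omega
      have : i' ∈ (Finset.range l).filter (fun x => j + 1 ≤ f x) := by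
        simpa [hil] using hle
      rw [heq] at this
      simpa using this
  have hgle : ∀ j, g j ≤ l := by
    intro j
    rw [hg]
    exact (Finset.card_filter_le _ _).trans (by simp)
  -- rewrite both sides in terms of h
  have lhs_eq : (∏ i ∈ Finset.range l,
        (1 + stmt10u ^ (2 * (f i : ℤ) - 2 * ((i : ℤ) + 1) + 1) * stmt10z)
          / (1 + stmt10u ^ (-2 * ((i : ℤ) + 1) + 1) * stmt10z))
      = (∏ i ∈ Finset.range l, h ((f i : ℤ) - i - 1))
          / (∏ i ∈ Finset.range l, h (-(i : ℤ) - 1)) := by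
    rw [← Finset.prod_div_distrib]
    refine Finset.prod_congr rfl fun i _ => ?_
    rw [hh]
    rw [show (2 * (f i : ℤ) - 2 * ((i : ℤ) + 1) + 1) = 2 * ((f i : ℤ) - i - 1) + 1 from by ring,
        show (-2 * ((i : ℤ) + 1) + 1) = 2 * (-(i : ℤ) - 1) + 1 from by ring]
  have rhs_eq : (∏ j ∈ Finset.range (f 0),
          (1 + stmt10u ^ (2 * ((j : ℤ) + 1) - 1) * stmt10z)
            / (1 + stmt10u ^ (-2 * (g j : ℤ) + 2 * ((j : ℤ) + 1) - 1) * stmt10z))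
      = (∏ j ∈ Finset.range (f 0), h (j : ℤ))
          / (∏ j ∈ Finset.range (f 0), h ((j : ℤ) - g j)) := by
    rw [← Finset.prod_div_distrib]
    refine Finset.prod_congr rfl fun j _ => ?_
    rw [hh]
    rw [show (2 * ((j : ℤ) + 1) - 1) = 2 * (j : ℤ) + 1 from by ring,
        show (-2 * (g j : ℤ) + 2 * ((j : ℤ) + 1) - 1) = 2 * ((j : ℤ) - g j) + 1 from by ring]
  rw [lhs_eq, rhs_eq,
    div_eq_div_iff (Finset.prod_ne_zero_iff.mpr fun i _ => hne _)
      (Finset.prod_ne_zero_iff.mpr fun j _ => hne _)]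
  -- goal : ∏ h(f i - i - 1) * ∏ h(j - g j) = ∏ h(j) * ∏ h(-i-1)
  set A := (Finset.range l).image (fun i : ℕ => (f i : ℤ) - (i : ℤ) - 1) with hA
  set B := (Finset.range (f 0)).image (fun j : ℕ => (j : ℤ) - (g j : ℤ)) with hB
  have injA : ∀ x ∈ Finset.range l, ∀ y ∈ Finset.range l,
      (f x : ℤ) - x - 1 = (f y : ℤ) - y - 1 → x = y := by
    have hsa : StrictAnti (fun i : ℕ => (f i : ℤ) - i - 1) := by
      apply strictAnti_nat_of_succ_lt
      intro n
      have := hf (show n ≤ n + 1 by omega)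
      push_cast
      omega
    exact fun x _ y _ hxy => hsa.injective hxy
  have injB : ∀ x ∈ Finset.range (f 0), ∀ y ∈ Finset.range (f 0),
      (x : ℤ) - g x = (y : ℤ) - g y → x = y := by
    have hga : ∀ j, g (j + 1) ≤ g j := by
      intro j
      by_contra hc
      push_neg at hc
      have h1 := (gchar (j + 1) (g j)).mp hc
      have h2 := (gchar j (g j)).mpr (by omega)
      omega
    have hsm : StrictMono (fun j : ℕ => (j : ℤ) - g j) := by
      apply strictMono_nat_of_lt_succ
      intro n
      have := hga n
      push_cast
      omega
    exact fun x _ y _ hxy => hsm.injective hxy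
  have hdisj : Disjoint A B := by
    rw [Finset.disjoint_left]
    intro c hcA hcB
    rw [hA, Finset.mem_image] at hcA
    rw [hB, Finset.mem_image] at hcB
    obtain ⟨i, hi, hci⟩ := hcA
    obtain ⟨j, hj, hcj⟩ := hcB
    have hgc := gchar j i
    rw [← hci] at hcj
    omega
  have hunion : A ∪ B = Finset.Ico (-(l : ℤ)) (f 0 : ℤ) := by
    ext c
    simp only [hA, hB, Finset.mem_union, Finset.mem_image, Finset.mem_Ico, Finset.mem_range]
    constructor
    · rintro (⟨i, hi, rfl⟩ | ⟨j, hj, rfl⟩)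
      · have h1 : f i ≤ f 0 := hf (Nat.zero_le i)
        omega
      · have h1 := hgle j
        omega
    · rintro ⟨hc1, hc2⟩
      have hex : ∃ i, (f i : ℤ) ≤ c + i + 1 := ⟨l, by rw [hl l le_rfl]; push_cast; omega⟩
      obtain ⟨i, hPi, hmin⟩ : ∃ i, ((f i : ℤ) ≤ c + i + 1) ∧
          ∀ k, k < i → ¬ ((f k : ℤ) ≤ c + k + 1) :=
        ⟨Nat.find hex, Nat.find_spec hex, fun k hk => Nat.find_min hex hk⟩
      have hil : i ≤ l := by
        by_contra hc
        push_neg at hc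
        exact hmin l hc (by rw [hl l le_rfl]; push_cast; omega)
      rcases hPi.lt_or_eq with hlt | heq
      · right
        have hi0 : i ≠ 0 := by
          intro h0
          rw [h0] at hlt
          push_cast at hlt
          omega
        have hprev : ¬ ((f (i - 1) : ℤ) ≤ c + (i - 1 : ℕ) + 1) := hmin (i - 1) (by omega)
        have hf0 : f (i - 1) ≤ f 0 := hf (Nat.zero_le _)
        refine ⟨(c + i).toNat, by omega, ?_⟩
        have hji : ((c + i).toNat : ℤ) = c + i := Int.toNat_of_nonneg (by omega)
        have hgj : g (c + i).toNat = i := by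
          have h1 : ¬ (i < g (c + i).toNat) := by
            intro hcon
            have := (gchar (c + i).toNat i).mp hcon
            omega
          have h2 : i - 1 < g (c + i).toNat := by
            apply (gchar (c + i).toNat (i - 1)).mpr
            omega
          omega
        rw [hgj]
        omega
      · left
        have hil' : i < l := by
          by_contra hc
          push_neg at hc
          rw [hl i hc] at heq
          push_cast at heq
          omega
        exact ⟨i, hil', by omega⟩
  have pA : ∏ i ∈ Finset.range l, h ((f i : ℤ) - i - 1) = ∏ c ∈ A, h c :=
    (Finset.prod_image injA).symm
  have pB : ∏ j ∈ Finset.range (f 0), h ((j : ℤ) - g j) = ∏ c ∈ B, h c :=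
    (Finset.prod_image injB).symm
  have pD : ∏ i ∈ Finset.range l, h (-(i : ℤ) - 1) = ∏ c ∈ Finset.Ico (-(l : ℤ)) 0, h c := by
    rw [show Finset.Ico (-(l : ℤ)) 0 = (Finset.range l).image (fun i : ℕ => -(i : ℤ) - 1) from ?_]
    · exact (Finset.prod_image (fun x _ y _ hxy => by omega)).symm
    · ext c
      simp only [Finset.mem_image, Finset.mem_Ico, Finset.mem_range]
      constructor
      · rintro ⟨hc1, hc2⟩
        exact ⟨(-c - 1).toNat, by omega, by omega⟩
      · rintro ⟨i, hi, rfl⟩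
        omega
  have pN : ∏ j ∈ Finset.range (f 0), h (j : ℤ) = ∏ c ∈ Finset.Ico (0 : ℤ) (f 0 : ℤ), h c := by
    rw [show Finset.Ico (0 : ℤ) (f 0 : ℤ) = (Finset.range (f 0)).image (fun j : ℕ => (j : ℤ)) from ?_]
    · exact (Finset.prod_image (fun x _ y _ hxy => by omega)).symm
    · ext c
      simp only [Finset.mem_image, Finset.mem_Ico, Finset.mem_range]
      constructor
      · rintro ⟨hc1, hc2⟩
        exact ⟨c.toNat, by omega, by omega⟩
      · rintro ⟨j, hj, rfl⟩
        omega
  rw [pA, pB, pD, pN, ← Finset.prod_union hdisj, hunion, mul_comm,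
    ← Finset.prod_union (Finset.Ico_disjoint_Ico_consecutive (-(l : ℤ)) 0 (f 0 : ℤ)),
    Finset.Ico_union_Ico_eq_Ico (by omega : (-(l : ℤ)) ≤ 0) (by positivity : (0 : ℤ) ≤ (f 0 : ℤ))]
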